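/- MUS proof-length lower bound: every resolution proof of a minimally unsatisfiable formula F has length at least 2·#F − 1; more precisely, every clause of F occurs among its entries, and the set of distinct derived clauses (entries not belonging to F) has cardinality at least #F − 1. -/

import Mathlib

open scoped Classical

noncomputable section

abbrev Var := ℕ
abbrev Lit := Var × Bool

/-- A clause: a finite set of literals containing no variable together with its negation. -/
abbrev Clause := {s : Finset Lit // ∀ v : Var, ¬((v, true) ∈ s ∧ (v, false) ∈ s)}

/-- The empty clause ⊥. -/
def emptyClause : Clause := ⟨∅, by simp⟩

abbrev CFormula := Finset Clause
abbrev Model := Var → Bool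

/-- A model satisfies a clause if some literal evaluates to true under it. -/
def SatClause (m : Model) (C : Clause) : Prop := ∃ l ∈ C.1, m l.1 = l.2

/-- A model satisfies a formula if it satisfies every clause. -/
def SatFormula (m : Model) (F : CFormula) : Prop := ∀ C ∈ F, SatClause m C

def Satisfiable (F : CFormula) : Prop := ∃ m, SatFormula m F

def Unsat (F : CFormula) : Prop := ¬ Satisfiable F

/-- `IsResolvent A B R` : `R = A ⋄ B` with some pivot variable `x`: `x ∈ A`, `x̄ ∈ B`,
no other variable occurs with opposite polarities in `A` and `B`, and
`R = (A ∖ {x}) ∪ (B ∖ {x̄})`. -/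
def IsResolvent (A B R : Clause) : Prop :=
  ∃ x : Var, (x, true) ∈ A.1 ∧ (x, false) ∈ B.1 ∧
    (∀ y : Var,
      (((y, true) ∈ A.1 ∧ (y, false) ∈ B.1) ∨ ((y, false) ∈ A.1 ∧ (y, true) ∈ B.1)) → y = x) ∧
    R.1 = (A.1.erase (x, true)) ∪ (B.1.erase (x, false))

/-- A resolution proof of `F`: a nonempty sequence of clauses ending in the empty clause
where each entry is an axiom (a clause of `F`) or a resolvent of two earlier entries. -/
def IsResProof (F : CFormula) (Q : List Clause) : Prop :=
  Q ≠ [] ∧ Q.getLast? = some emptyClause ∧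
  ∀ i : Fin Q.length, Q.get i ∈ F ∨
    ∃ j k : Fin Q.length, j < i ∧ k < i ∧ IsResolvent (Q.get j) (Q.get k) (Q.get i)

/-- `layersUpTo L j = L⁰ ∪ ⋯ ∪ L^{j-1}`. -/
def layersUpTo (L : List CFormula) (j : ℕ) : CFormula :=
  (Finset.range j).biUnion fun i => L.getD i ∅

/-- `tailUnion L = L¹ ∪ ⋯ ∪ Lⁿ`. -/
def tailUnion (L : List CFormula) : CFormula :=
  (Finset.Ico 1 L.length).biUnion fun i => L.getD i ∅

/-- A layer list on `F`: initialization, termination, consistency, take-it-or-leave-it. -/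
def IsLayerList (F : CFormula) (L : List CFormula) : Prop :=
  L.head? = some F ∧
  (∃ k, 1 ≤ k ∧ k < L.length ∧ emptyClause ∈ L.getD k ∅) ∧
  (∀ j, 1 ≤ j → j < L.length → ∀ ω ∈ L.getD j ∅,
      ∃ ω' ∈ L.getD (j - 1) ∅, ∃ ω'' ∈ layersUpTo L j, IsResolvent ω' ω'' ω) ∧
  (∀ k j, 1 ≤ k → k < j → j < L.length → ∀ ω ∈ L.getD j ∅,
      ¬ ∃ ω' ∈ L.getD (k - 1) ∅, ∃ ω'' ∈ layersUpTo L k, IsResolvent ω' ω'' ω)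

/-- The length of a layer list: the total number of clauses in all its layers. -/
def llLength (L : List CFormula) : ℕ := (L.map Finset.card).sum

/-- The frontier of `F`: clauses of `F` not strictly containing another clause of `F`. -/
def Frontier (F : CFormula) : CFormula := F.filter fun ω => ¬ ∃ ω' ∈ F, ω'.1 ⊂ ω.1

/-- A subproblem: previous, current, next and forgotten clause sets. -/
structure Subproblem where
  previous : CFormula
  current : CFormula
  next : CFormula
  forgotten : CFormula

/-- The known clauses of a subproblem. -/
def Subproblem.known (P : Subproblem) : CFormula := P.previous ∪ P.current ∪ P.next

/-- A compatible proof of a subproblem `P`: a layer list on `F` such that for some `k`,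
`L^k = Current(P)`, `L⁰ ∪ ⋯ ∪ L^{k-1} = Previous(P)`, `L^{k+1} ⊇ Next(P)`, and no
forgotten clause occurs in any layer. -/
def CompatibleProof (F : CFormula) (P : Subproblem) (L : List CFormula) : Prop :=
  IsLayerList F L ∧
  (∃ k, k < L.length ∧ L.getD k ∅ = P.current ∧ layersUpTo L k = P.previous ∧
      P.next ⊆ L.getD (k + 1) ∅) ∧
  ∀ ω ∈ P.forgotten, ω ∉ layersUpTo L L.length


/-- A formula is minimally unsatisfiable if it is UNSAT and removing any clause makes it
satisfiable. -/
def MinimallyUnsat (F : CFormula) : Prop := Unsat F ∧ ∀ ω ∈ F, Satisfiable (F.erase ω)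


/-- Auxiliary: the index of the first occurrence of an element is at most any index
where it occurs. -/
lemma aux_indexOf_le_get (l : List Clause) (j : Fin l.length) :
    l.idxOf (l.get j) ≤ j := by
  induction l with
  | nil => exact absurd j.2 (by simp)
  | cons x t ih =>
    rcases j with ⟨j, hj⟩
    cases j with
    | zero => simp
    | succ i =>
      have hi : i < t.length := by simpa using hj
      have := ih ⟨i, hi⟩
      simp only [List.get_cons_succ, List.idxOf_cons, List.get_eq_getElem] at *
      cases hxe : (x == t[i]) <;> simp [hxe] <;> omega

lemma aux_mem_of_getLast? {l : List Clause} {a : Clause} (h : l.getLast? = some a) :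
    a ∈ l := by
  induction l with
  | nil => simp at h
  | cons x t ih =>
    cases t with
    | nil => simp_all
    | cons y s =>
      rw [List.getLast?_cons_cons] at h
      simp [ih h]

/-- Soundness of a single resolution step. -/
lemma aux_resolvent_sound {A B R : Clause} (h : IsResolvent A B R) (m : Model)
    (hA : SatClause m A) (hB : SatClause m B) : SatClause m R := by
  obtain ⟨x, hxA, hxB, -, hR⟩ := h
  obtain ⟨l, hl, hlm⟩ := hA
  by_cases hlx : l = (x, true)
  · obtain ⟨l', hl', hl'm⟩ := hB
    by_cases hl'x : l' = (x, false)
    · subst hlx; subst hl'x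
      simp only at hlm hl'm
      rw [hlm] at hl'm
      cases hl'm
    · exact ⟨l', by rw [hR]; exact Finset.mem_union_right _ (Finset.mem_erase.2 ⟨hl'x, hl'⟩), hl'm⟩
  · exact ⟨l, by rw [hR]; exact Finset.mem_union_left _ (Finset.mem_erase.2 ⟨hlx, hl⟩), hlm⟩

/-- `c` has a pair of premises occurring strictly earlier in `Q` resolving to `c`. -/
def HasPrem (Q : List Clause) (c : Clause) : Prop :=
  ∃ a, a ∈ Q ∧ ∃ b, b ∈ Q ∧ Q.idxOf a < Q.idxOf c ∧ Q.idxOf b < Q.idxOf c ∧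
    IsResolvent a b c

def prem1 (Q : List Clause) (c : Clause) : Clause :=
  if h : HasPrem Q c then h.choose else emptyClause

def prem2 (Q : List Clause) (c : Clause) : Clause :=
  if h : HasPrem Q c then h.choose_spec.2.choose else emptyClause

lemma prem_spec (Q : List Clause) {c : Clause} (h : HasPrem Q c) :
    prem1 Q c ∈ Q ∧ prem2 Q c ∈ Q ∧ Q.idxOf (prem1 Q c) < Q.idxOf c ∧
      Q.idxOf (prem2 Q c) < Q.idxOf c ∧ IsResolvent (prem1 Q c) (prem2 Q c) c := by
  rw [prem1, prem2, dif_pos h, dif_pos h]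
  exact ⟨h.choose_spec.1, h.choose_spec.2.choose_spec.1, h.choose_spec.2.choose_spec.2.1,
    h.choose_spec.2.choose_spec.2.2.1, h.choose_spec.2.choose_spec.2.2.2⟩

lemma hasPrem_of {F : CFormula} {Q : List Clause} (hQ : IsResProof F Q) {c : Clause}
    (hc : c ∈ Q) (hcF : c ∉ F) : HasPrem Q c := by
  have hlt : Q.idxOf c < Q.length := List.idxOf_lt_length_iff.2 hc
  have hget : Q.get ⟨Q.idxOf c, hlt⟩ = c := List.idxOf_get hlt
  rcases hQ.2.2 ⟨Q.idxOf c, hlt⟩ with h | ⟨j, k, hj, hk, hres⟩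
  · rw [hget] at h; exact absurd h hcF
  · refine ⟨Q.get j, List.get_mem Q j, Q.get k, List.get_mem Q k, ?_, ?_, ?_⟩
    · exact lt_of_le_of_lt (aux_indexOf_le_get Q j) hj
    · exact lt_of_le_of_lt (aux_indexOf_le_get Q k) hk
    · rwa [hget] at hres

lemma mem_F_of_idx_zero {F : CFormula} {Q : List Clause} (hQ : IsResProof F Q) {c : Clause}
    (hc : c ∈ Q) (h0 : Q.idxOf c = 0) : c ∈ F := by
  have hlt : Q.idxOf c < Q.length := List.idxOf_lt_length_iff.2 hc
  have hget : Q.get ⟨Q.idxOf c, hlt⟩ = c := List.idxOf_get hlt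
  rcases hQ.2.2 ⟨Q.idxOf c, hlt⟩ with h | ⟨j, k, hj, -, -⟩
  · rwa [hget] at h
  · exfalso
    have : (j : ℕ) < Q.idxOf c := hj
    omega

/-- DFS through the chosen resolution DAG, collecting visited clauses. -/
def visit (F : CFormula) (Q : List Clause) : ℕ → Clause → Finset Clause → Finset Clause
  | 0, c, V => if c ∈ V then V else insert c V
  | n+1, c, V =>
    if c ∈ V then V
    else if c ∈ F then insert c V
    else visit F Q n (prem2 Q c) (visit F Q n (prem1 Q c) (insert c V))

/-- Every derived clause of `V` outside the pending set `P` has both premises in `V`. -/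
def Good (F : CFormula) (Q : List Clause) (V P : Finset Clause) : Prop :=
  ∀ d ∈ V, d ∉ F → d ∉ P →
    ∃ a ∈ V, ∃ b ∈ V, IsResolvent a b d ∧ Q.idxOf a < Q.idxOf d ∧ Q.idxOf b < Q.idxOf d

lemma insert_axiom_step (F : CFormula) (Q : List Clause) {c : Clause} {V P : Finset Clause}
    (hc : c ∈ Q) (hcF : c ∈ F) (hcv : c ∉ V) (hVQ : V ⊆ Q.toFinset) (hG : Good F Q V P) :
    V ⊆ insert c V ∧ c ∈ insert c V ∧ insert c V ⊆ Q.toFinset ∧ Good F Q (insert c V) P ∧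
      (insert c V).card + 2 * (V \ F).card ≤ V.card + 2 * ((insert c V) \ F).card + 1 := by
  refine ⟨Finset.subset_insert _ _, Finset.mem_insert_self _ _,
    Finset.insert_subset (List.mem_toFinset.2 hc) hVQ, ?_, ?_⟩
  · intro d hd hdF hdP
    rcases Finset.mem_insert.1 hd with rfl | hd'
    · exact absurd hcF hdF
    · obtain ⟨a, ha, b, hb, hres⟩ := hG d hd' hdF hdP
      exact ⟨a, Finset.mem_insert_of_mem ha, b, Finset.mem_insert_of_mem hb, hres⟩
  · have h1 : (insert c V).card = V.card + 1 := Finset.card_insert_of_notMem hcv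
    have h2 : insert c V \ F = V \ F := by
      ext d
      by_cases hdc : d = c <;> simp [hdc, hcF, Finset.mem_sdiff]
    rw [h1, h2]
    omega

lemma visit_spec (F : CFormula) (Q : List Clause) (hQ : IsResProof F Q) :
    ∀ n (c : Clause) (V P : Finset Clause), c ∈ Q → Q.idxOf c ≤ n → V ⊆ Q.toFinset →
      Good F Q V P →
      V ⊆ visit F Q n c V ∧ c ∈ visit F Q n c V ∧ visit F Q n c V ⊆ Q.toFinset ∧
        Good F Q (visit F Q n c V) P ∧
        (visit F Q n c V).card + 2 * (V \ F).card ≤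
          V.card + 2 * ((visit F Q n c V) \ F).card + 1 := by
  intro n
  induction n with
  | zero =>
    intro c V P hc h0 hVQ hG
    have hcF : c ∈ F := mem_F_of_idx_zero hQ hc (Nat.le_zero.1 h0)
    simp only [visit]
    by_cases hcv : c ∈ V
    · rw [if_pos hcv]; exact ⟨subset_rfl, hcv, hVQ, hG, by omega⟩
    · rw [if_neg hcv]; exact insert_axiom_step F Q hc hcF hcv hVQ hG
  | succ n ih =>
    intro c V P hc hn hVQ hG
    simp only [visit]
    by_cases hcv : c ∈ V
    · rw [if_pos hcv]; exact ⟨subset_rfl, hcv, hVQ, hG, by omega⟩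
    rw [if_neg hcv]
    by_cases hcF : c ∈ F
    · rw [if_pos hcF]; exact insert_axiom_step F Q hc hcF hcv hVQ hG
    rw [if_neg hcF]
    obtain ⟨ha, hb, hia, hib, hres⟩ := prem_spec Q (hasPrem_of hQ hc hcF)
    have hG1 : Good F Q (insert c V) (insert c P) := by
      intro d hd hdF hdP
      rcases Finset.mem_insert.1 hd with rfl | hd'
      · exact absurd (Finset.mem_insert_self _ _) hdP
      · obtain ⟨a', ha', b', hb', hr⟩ :=
          hG d hd' hdF (fun h => hdP (Finset.mem_insert_of_mem h))
        exact ⟨a', Finset.mem_insert_of_mem ha', b', Finset.mem_insert_of_mem hb', hr⟩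
    have hV1Q : insert c V ⊆ Q.toFinset := Finset.insert_subset (List.mem_toFinset.2 hc) hVQ
    obtain ⟨hs1, hm1, hq1, hg1, hc1⟩ :=
      ih (prem1 Q c) (insert c V) (insert c P) ha (by omega) hV1Q hG1
    obtain ⟨hs2, hm2, hq2, hg2, hc2⟩ :=
      ih (prem2 Q c) (visit F Q n (prem1 Q c) (insert c V)) (insert c P) hb (by omega) hq1 hg1
    refine ⟨(Finset.subset_insert c V).trans (hs1.trans hs2),
      hs2 (hs1 (Finset.mem_insert_self _ _)), hq2, ?_, ?_⟩
    · intro d hd hdF hdP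
      by_cases hdc : d = c
      · subst hdc
        exact ⟨prem1 Q d, hs2 hm1, prem2 Q d, hm2, hres, hia, hib⟩
      · exact hg2 d hd hdF (by
          intro h
          rcases Finset.mem_insert.1 h with h' | h'
          · exact hdc h'
          · exact hdP h')
    · have e1 : (insert c V).card = V.card + 1 := Finset.card_insert_of_notMem hcv
      have e2 : ((insert c V) \ F).card = (V \ F).card + 1 := by
        have : insert c V \ F = insert c (V \ F) := by
          ext d
          by_cases hdc : d = c <;> simp [hdc, hcF, Finset.mem_sdiff]
        rw [this, Finset.card_insert_of_notMem (fun h => hcv (Finset.mem_sdiff.1 h).1)]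
      omega

lemma good_sound (F : CFormula) (Q : List Clause) (V : Finset Clause) (hG : Good F Q V ∅)
    (m : Model) (hm : ∀ C ∈ V, C ∈ F → SatClause m C) : ∀ d ∈ V, SatClause m d := by
  have key : ∀ n, ∀ d ∈ V, Q.idxOf d ≤ n → SatClause m d := by
    intro n
    induction n using Nat.strong_induction_on with
    | _ n ihn =>
      intro d hd hdn
      by_cases hdF : d ∈ F
      · exact hm d hd hdF
      · obtain ⟨a, ha, b, hb, hres, hia, hib⟩ := hG d hd hdF (Finset.notMem_empty d)
        exact aux_resolvent_sound hres m (ihn (Q.idxOf a) (by omega) a ha le_rfl)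
          (ihn (Q.idxOf b) (by omega) b hb le_rfl)
  exact fun d hd => key (Q.idxOf d) d hd le_rfl


/-- MUS proof-length lower bound. -/
theorem mus_proof_length_bound (F : CFormula) (hF : MinimallyUnsat F)
    (Q : List Clause) (hQ : IsResProof F Q) :
    (∀ ω ∈ F, ω ∈ Q) ∧ F.card - 1 ≤ (Q.toFinset \ F).card ∧
    2 * F.card - 1 ≤ Q.length := by
  have hbot : emptyClause ∈ Q := aux_mem_of_getLast? hQ.2.1
  obtain ⟨-, hbotV, hVQ, hGood, hcount⟩ :=
    visit_spec F Q hQ (Q.idxOf emptyClause) emptyClause ∅ ∅ hbot le_rfl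
      (Finset.empty_subset _) (fun d hd => absurd hd (Finset.notMem_empty d))
  set V := visit F Q (Q.idxOf emptyClause) emptyClause ∅ with hV
  have hFV : F ⊆ V := by
    intro ω hω
    by_contra hωV
    obtain ⟨m, hm⟩ := hF.2 ω hω
    have hsat : ∀ C ∈ V, C ∈ F → SatClause m C := fun C hC hCF =>
      hm C (Finset.mem_erase.2 ⟨fun he => hωV (he ▸ hC), hCF⟩)
    obtain ⟨l, hl, -⟩ := good_sound F Q V hGood m hsat emptyClause hbotV
    simp [emptyClause] at hl
  have hFQ : F ⊆ Q.toFinset := hFV.trans hVQ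
  have hsplit : (V \ F).card + F.card = V.card := by
    rw [Finset.card_sdiff_add_card, Finset.union_eq_left.2 hFV]
  have hsub : V \ F ⊆ Q.toFinset \ F := fun d hd =>
    Finset.mem_sdiff.2 ⟨hVQ (Finset.mem_sdiff.1 hd).1, (Finset.mem_sdiff.1 hd).2⟩
  have h2 : (V \ F).card ≤ (Q.toFinset \ F).card := Finset.card_le_card hsub
  have h3 : (Q.toFinset \ F).card + F.card = Q.toFinset.card := by
    rw [Finset.card_sdiff_add_card, Finset.union_eq_left.2 hFQ]
  have h4 : Q.toFinset.card ≤ Q.length := Q.toFinset_card_le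
  simp only [Finset.empty_sdiff, Finset.card_empty, Finset.sdiff_empty] at hcount
  refine ⟨fun ω hω => List.mem_toFinset.1 (hFQ hω), by omega, by omega⟩


end
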